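/- Let a = (a_1,…,a_p) and b = (b_1,…,b_q) be convergent words in {0,1} (i.e. each begins with 1 and ends with 0). For every subset S ⊆ {1,…,p+q} with |S| = p, let c_S ∈ {0,1}^{p+q} be the word obtained by placing the letters of a, in order, at the positions of S and the letters of b, in order, at the positions of the complement of S. Then every c_S is convergent and I(a)·I(b) = Σ_{S ⊆ {1,…,p+q}, |S| = p} I(c_S). (This is the shuffle product formula for iterated integrals.) -/

import Mathlib

open MeasureTheory

/-- The open simplex 0 < t₁ < ⋯ < t_w < 1. -/
def openSimplex (w : ℕ) : Set (Fin w → ℝ) :=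
  {t | (∀ i, 0 < t i ∧ t i < 1) ∧ ∀ i j : Fin w, i < j → t i < t j}

/-- The iterated integral `I(a)` attached to a word `a` of length `w` in the letters `{0,1}`
(given as a function `ℕ → ℕ`, only the values `a 0, …, a (w-1)` being relevant), where the
letter `1` contributes the form `dt/(1-t)` and the letter `0` the form `dt/t`. -/
noncomputable def wordIntegral (w : ℕ) (a : ℕ → ℕ) : ℝ :=
  ∫ t in openSimplex w, ∏ i : Fin w, (if a i = 1 then (1 - t i)⁻¹ else (t i)⁻¹)

/-- The shuffle `c_S` of the words `a` (of length `p`) and `b` (of length `q`) along a subset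
`S` of the positions `{0, …, p+q-1}`: the letters of `a` are placed in order at the positions
of `S` and the letters of `b` in order at the positions of the complement of `S`. -/
def shuffleWord (p q : ℕ) (a b : ℕ → ℕ) (S : Finset (Fin (p + q))) : ℕ → ℕ := fun k =>
  if hk : k < p + q then
    if (⟨k, hk⟩ : Fin (p + q)) ∈ S then
      a ((S.filter (fun j : Fin (p + q) => (j : ℕ) < k)).card)
    else
      b ((Sᶜ.filter (fun j : Fin (p + q) => (j : ℕ) < k)).card)
  else 0

lemma rank_orderEmbOfFin {n m : ℕ} (S : Finset (Fin n)) (h : S.card = m) (i : Fin m) :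
    (S.filter (fun j : Fin n => (j : ℕ) < ((S.orderEmbOfFin h i : Fin n) : ℕ))).card = i := by
  have himg : S.filter (fun j : Fin n => (j : ℕ) < ((S.orderEmbOfFin h i : Fin n) : ℕ))
      = (Finset.Iio i).image (S.orderEmbOfFin h) := by
    ext x
    simp only [Finset.mem_filter, Finset.mem_image, Finset.mem_Iio]
    constructor
    · rintro ⟨hxS, hlt⟩
      have : x ∈ Set.range (S.orderEmbOfFin h) := by
        rw [Finset.range_orderEmbOfFin]; exact hxS
      obtain ⟨j, rfl⟩ := this
      exact ⟨j, (S.orderEmbOfFin h).lt_iff_lt.mp (Fin.lt_def.mpr hlt), rfl⟩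
    · rintro ⟨j, hj, rfl⟩
      refine ⟨Finset.orderEmbOfFin_mem _ _ _, ?_⟩
      exact Fin.lt_def.mp ((S.orderEmbOfFin h).strictMono hj)
  rw [himg, Finset.card_image_of_injective _ (S.orderEmbOfFin h).injective, Fin.card_Iio]

section
variable {p q : ℕ} (a b : ℕ → ℕ) (S : Finset (Fin (p + q))) (hS : S.card = p)

include hS in
lemma card_compl_shuffle : Sᶜ.card = q := by
  simp [Finset.card_compl, hS]

lemma shuffle_apply_mem (k : Fin (p + q)) (hk : k ∈ S) :
    shuffleWord p q a b S k = a ((S.filter (fun j : Fin (p + q) => (j : ℕ) < (k : ℕ))).card) := by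
  have h1 : (k : ℕ) < p + q := k.is_lt
  rw [shuffleWord, dif_pos h1, if_pos (by simpa [Fin.eta] using hk)]

lemma shuffle_apply_not_mem (k : Fin (p + q)) (hk : k ∉ S) :
    shuffleWord p q a b S k = b ((Sᶜ.filter (fun j : Fin (p + q) => (j : ℕ) < (k : ℕ))).card) := by
  have h1 : (k : ℕ) < p + q := k.is_lt
  rw [shuffleWord, dif_pos h1, if_neg (by simpa [Fin.eta] using hk)]

lemma shuffle_inl (i : Fin p) :
    shuffleWord p q a b S ((S.orderEmbOfFin hS i : Fin (p + q)) : ℕ) = a i := by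
  rw [show ((S.orderEmbOfFin hS i : Fin (p+q)) : ℕ) = ((S.orderEmbOfFin hS i : Fin (p+q)) : Fin (p+q)) from rfl] at *
  rw [shuffle_apply_mem a b S _ (Finset.orderEmbOfFin_mem _ _ _), rank_orderEmbOfFin]

lemma shuffle_inr (j : Fin q) :
    shuffleWord p q a b S ((Sᶜ.orderEmbOfFin (card_compl_shuffle S hS) j : Fin (p + q)) : ℕ) = b j := by
  have hmem := Finset.orderEmbOfFin_mem Sᶜ (card_compl_shuffle S hS) j
  rw [shuffle_apply_not_mem a b S _ (Finset.mem_compl.mp hmem), rank_orderEmbOfFin]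

end
section
variable {p q : ℕ} (a b : ℕ → ℕ) (S : Finset (Fin (p + q))) (hS : S.card = p)

include hS in
lemma shuffle_endpoints (hp : 0 < p) (hq : 0 < q) (ha1 : a 0 = 1) (ha0 : a (p - 1) = 0)
    (hb1 : b 0 = 1) (hb0 : b (q - 1) = 0) :
    shuffleWord p q a b S 0 = 1 ∧ shuffleWord p q a b S (p + q - 1) = 0 := by
  have hn : 0 < p + q := by omega
  constructor
  · have h0 : (((⟨0, hn⟩ : Fin (p + q)) : Fin (p+q)) : ℕ) = 0 := rfl
    have hfil : ∀ T : Finset (Fin (p + q)),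
        T.filter (fun j : Fin (p + q) => (j : ℕ) < 0) = ∅ := by
      intro T; apply Finset.filter_false_of_mem; intro x _; omega
    by_cases hm : (⟨0, hn⟩ : Fin (p + q)) ∈ S
    · rw [show (0:ℕ) = (((⟨0, hn⟩ : Fin (p+q))) : ℕ) from rfl,
        shuffle_apply_mem a b S _ hm, hfil]
      simpa using ha1
    · rw [show (0:ℕ) = (((⟨0, hn⟩ : Fin (p+q))) : ℕ) from rfl,
        shuffle_apply_not_mem a b S _ hm, hfil]
      simpa using hb1
  · set L : Fin (p + q) := ⟨p + q - 1, by omega⟩ with hL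
    have hfil : ∀ T : Finset (Fin (p + q)),
        T.filter (fun j : Fin (p + q) => (j : ℕ) < ((L : Fin (p+q)) : ℕ)) = T.erase L := by
      intro T; ext x
      simp only [Finset.mem_filter, Finset.mem_erase]
      have hx : (x : ℕ) < p + q := x.is_lt
      constructor
      · rintro ⟨hxT, hlt⟩
        refine ⟨?_, hxT⟩
        intro hxe; rw [hxe] at hlt; exact absurd hlt (lt_irrefl _)
      · rintro ⟨hne, hxT⟩
        refine ⟨hxT, ?_⟩
        have : (x : ℕ) ≠ p + q - 1 := by
          intro hcon; exact hne (Fin.ext hcon)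
        show (x:ℕ) < (⟨p + q - 1, by omega⟩ : Fin (p+q)).val
        simp only []
        omega
    by_cases hm : L ∈ S
    · rw [show (p + q - 1 : ℕ) = ((L : Fin (p+q)) : ℕ) from rfl,
        shuffle_apply_mem a b S _ hm, hfil, Finset.card_erase_of_mem hm, hS]
      exact ha0
    · have hm' : L ∈ Sᶜ := Finset.mem_compl.mpr hm
      rw [show (p + q - 1 : ℕ) = ((L : Fin (p+q)) : ℕ) from rfl,
        shuffle_apply_not_mem a b S _ hm, hfil, Finset.card_erase_of_mem hm',
        card_compl_shuffle S hS]
      exact hb0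

end

section merge
variable {p q : ℕ}

/-- The order-preserving identification of `Fin p ⊕ Fin q` with `Fin (p+q)` sending `inl`
to `S` and `inr` to `Sᶜ`. -/
noncomputable def mergeEquiv (S : Finset (Fin (p + q))) (hS : S.card = p) :
    (Fin p ⊕ Fin q) ≃ Fin (p + q) :=
  Equiv.ofBijective
    (Sum.elim (S.orderEmbOfFin hS) (Sᶜ.orderEmbOfFin (card_compl_shuffle S hS)))
    ((Fintype.bijective_iff_injective_and_card _).mpr ⟨by
      rintro (i | i) (j | j) h <;> simp only [Sum.elim_inl, Sum.elim_inr] at h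
      · exact congrArg Sum.inl ((S.orderEmbOfFin hS).injective h)
      · exact absurd (Finset.mem_compl.mp (h ▸ Finset.orderEmbOfFin_mem Sᶜ _ j))
          (not_not.mpr (Finset.orderEmbOfFin_mem S hS i))
      · exact absurd (Finset.mem_compl.mp (h ▸ Finset.orderEmbOfFin_mem Sᶜ _ i))
          (not_not.mpr (Finset.orderEmbOfFin_mem S hS j))
      · exact congrArg Sum.inr ((Sᶜ.orderEmbOfFin _).injective h), by simp⟩)

lemma mergeEquiv_inl (S : Finset (Fin (p + q))) (hS : S.card = p) (i : Fin p) :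
    mergeEquiv S hS (Sum.inl i) = S.orderEmbOfFin hS i := rfl

lemma mergeEquiv_inr (S : Finset (Fin (p + q))) (hS : S.card = p) (j : Fin q) :
    mergeEquiv S hS (Sum.inr j) = Sᶜ.orderEmbOfFin (card_compl_shuffle S hS) j := rfl

/-- The merge map on coordinates. -/
noncomputable def mergeMap (S : Finset (Fin (p + q))) (hS : S.card = p) :
    ((Fin p → ℝ) × (Fin q → ℝ)) ≃ᵐ (Fin (p + q) → ℝ) :=
  (MeasurableEquiv.sumPiEquivProdPi (fun _ : Fin p ⊕ Fin q => ℝ)).symm.trans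
    (MeasurableEquiv.piCongrLeft (fun _ => ℝ) (mergeEquiv S hS))

lemma mergeMap_apply (S : Finset (Fin (p + q))) (hS : S.card = p)
    (x : (Fin p → ℝ) × (Fin q → ℝ)) (z : Fin p ⊕ Fin q) :
    mergeMap S hS x (mergeEquiv S hS z) = Sum.elim x.1 x.2 z := by
  simp only [mergeMap, MeasurableEquiv.trans_apply, MeasurableEquiv.coe_piCongrLeft,
    Equiv.piCongrLeft_apply_apply]
  cases z <;> rfl

lemma mergeMap_apply' (S : Finset (Fin (p + q))) (hS : S.card = p)
    (x : (Fin p → ℝ) × (Fin q → ℝ)) (k : Fin (p + q)) :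
    mergeMap S hS x k = Sum.elim x.1 x.2 ((mergeEquiv S hS).symm k) := by
  conv_lhs => rw [← Equiv.apply_symm_apply (mergeEquiv S hS) k]
  rw [mergeMap_apply]

lemma mergeMap_measurePreserving (S : Finset (Fin (p + q))) (hS : S.card = p) :
    MeasurePreserving (mergeMap S hS) volume volume :=
  (volume_measurePreserving_sumPiEquivProdPi_symm _).trans
    (volume_measurePreserving_piCongrLeft _ (mergeEquiv S hS))

/-- The region of the product of simplices corresponding to the shuffle `S`. -/
noncomputable def DS (p q : ℕ) (S : Finset (Fin (p + q))) :
    Set ((Fin p → ℝ) × (Fin q → ℝ)) :=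
  if h : S.card = p then mergeMap S h ⁻¹' openSimplex (p + q) else ∅

lemma DS_eq (S : Finset (Fin (p + q))) (hS : S.card = p) :
    DS p q S = mergeMap S hS ⁻¹' openSimplex (p + q) := dif_pos hS

end merge

section integrability

lemma isOpen_openSimplex (w : ℕ) : IsOpen (openSimplex w) := by
  have : openSimplex w =
      (⋂ i : Fin w, ({t : Fin w → ℝ | 0 < t i} ∩ {t | t i < 1})) ∩
      ⋂ i : Fin w, ⋂ j : Fin w, ⋂ (_ : i < j), {t : Fin w → ℝ | t i < t j} := by
    ext t
    simp only [openSimplex, Set.mem_inter_iff, Set.mem_iInter, Set.mem_setOf_eq]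
  rw [this]
  refine IsOpen.inter (isOpen_iInter_of_finite fun i => ?_)
    (isOpen_iInter_of_finite fun i => isOpen_iInter_of_finite fun j =>
      isOpen_iInter_of_finite fun _ => isOpen_lt (continuous_apply i) (continuous_apply j))
  exact (isOpen_lt continuous_const (continuous_apply i)).inter
    (isOpen_lt (continuous_apply i) continuous_const)

lemma measurableSet_openSimplex (w : ℕ) : MeasurableSet (openSimplex w) :=
  (isOpen_openSimplex w).measurableSet

lemma integrable_oneDim {c : ℝ} (hc0 : 0 ≤ c) (hc : c < 1) :
    IntegrableOn (fun y : ℝ => y ^ (-c) * (1 - y) ^ (-c)) (Set.Ioo (0:ℝ) 1) := by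
  set u : ℂ := ((1 - c : ℝ) : ℂ) with hu
  have hre : 0 < u.re := by rw [hu, Complex.ofReal_re]; linarith
  have h := Complex.betaIntegral_convergent hre hre
  rw [intervalIntegrable_iff_integrableOn_Ioo_of_le zero_le_one] at h
  have h2 := h.norm
  refine IntegrableOn.congr_fun h2 (fun x hx => ?_) measurableSet_Ioo
  obtain ⟨hx0, hx1⟩ := hx
  have hu1 : u - 1 = ((-c : ℝ) : ℂ) := by rw [hu]; push_cast; ring
  have e1 : (x : ℂ) ^ (u - 1) = (((x : ℝ) ^ (-c) : ℝ) : ℂ) := by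
    rw [hu1, ← Complex.ofReal_cpow hx0.le]
  have e2 : (1 - (x : ℂ)) ^ (u - 1) = ((((1 - x : ℝ)) ^ (-c) : ℝ) : ℂ) := by
    have hone : (1 - (x:ℂ)) = (((1 - x : ℝ)) : ℂ) := by push_cast; ring
    rw [hu1, hone, ← Complex.ofReal_cpow (by linarith)]
  rw [e1, e2, ← Complex.ofReal_mul, Complex.norm_real, Real.norm_eq_abs,
    abs_of_nonneg (mul_nonneg (Real.rpow_nonneg hx0.le _) (Real.rpow_nonneg (by linarith) _))]

lemma prod_inv_le_rpow {w : ℕ} (hw : 0 < w) (u : Fin w → ℝ) (hu : ∀ i, 0 < u i ∧ u i < 1)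
    (P : Fin w → Prop) [DecidablePred P] (i0 : Fin w) (hi0 : ¬ P i0)
    (hcomp : ∀ i, P i → u i0 ≤ u i) :
    ∏ i ∈ Finset.univ.filter P, (u i)⁻¹ ≤ ∏ i, (u i) ^ (-(((w:ℝ)-1)/w)) := by
  have hApos : (0:ℝ) < ∏ i, u i := Finset.prod_pos fun i _ => (hu i).1
  set A : ℝ := ∏ i, u i with hA
  set B : ℝ := ∏ i ∈ Finset.univ.filter P, u i with hB
  have hBpos : 0 < B := Finset.prod_pos fun i _ => (hu i).1
  have hB1 : B ≤ 1 := Finset.prod_le_one (fun i _ => (hu i).1.le) (fun i _ => (hu i).2.le)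
  set z := (Finset.univ.filter P).card with hz
  have hzle : z ≤ w - 1 := by
    have hsub : Finset.univ.filter P ⊆ Finset.univ.erase i0 := by
      intro x hx
      rcases Finset.mem_filter.mp hx with ⟨_, hPx⟩
      exact Finset.mem_erase.mpr ⟨fun hxe => hi0 (hxe ▸ hPx), Finset.mem_univ x⟩
    calc z ≤ (Finset.univ.erase i0).card := Finset.card_le_card hsub
      _ = w - 1 := by rw [Finset.card_erase_of_mem (Finset.mem_univ i0)]; simp
  have step1 : A ^ (w - 1) ≤ B ^ w := by
    have hsplit : A ^ (w - 1) =
        B ^ (w - 1) * ∏ i ∈ Finset.univ.filter (fun i => ¬ P i), u i ^ (w - 1) := by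
      rw [hA, ← Finset.prod_pow, ← Finset.prod_filter_mul_prod_filter_not Finset.univ P,
        Finset.prod_pow]
    have h2 : ∏ i ∈ Finset.univ.filter (fun i => ¬ P i), u i ^ (w - 1) ≤ u i0 ^ (w - 1) := by
      have hmem : i0 ∈ Finset.univ.filter (fun i => ¬ P i) := by
        simp [hi0]
      rw [← Finset.mul_prod_erase _ _ hmem]
      have : ∏ i ∈ (Finset.univ.filter (fun i => ¬ P i)).erase i0, u i ^ (w-1) ≤ 1 :=
        Finset.prod_le_one (fun i _ => pow_nonneg (hu i).1.le _)
          (fun i _ => pow_le_one₀ (hu i).1.le (hu i).2.le)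
      nlinarith [pow_pos (hu i0).1 (w-1)]
    have h3 : u i0 ^ (w - 1) ≤ B := by
      calc u i0 ^ (w - 1) ≤ u i0 ^ z :=
            pow_le_pow_of_le_one (hu i0).1.le (hu i0).2.le hzle
        _ = ∏ _i ∈ Finset.univ.filter P, u i0 := by rw [Finset.prod_const]
        _ ≤ B := Finset.prod_le_prod (fun i _ => (hu i0).1.le)
            (fun i hi => hcomp i (Finset.mem_filter.mp hi).2)
    calc A ^ (w - 1) = B ^ (w-1) * ∏ i ∈ Finset.univ.filter (fun i => ¬ P i), u i ^ (w - 1) :=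
          hsplit
      _ ≤ B ^ (w - 1) * B := by
          have := mul_le_mul_of_nonneg_left (h2.trans h3) (le_of_lt (pow_pos hBpos (w-1)))
          exact this
      _ = B ^ (w - 1 + 1) := by rw [pow_succ]
      _ = B ^ w := by congr 1; omega
  have hwR : (0:ℝ) < (w:ℝ) := by exact_mod_cast hw
  set r : ℝ := ((w:ℝ)-1)/w with hr
  have key : A ^ r ≤ B := by
    have e1 : A ^ r = (A ^ (w - 1)) ^ ((w:ℝ)⁻¹) := by
      rw [← Real.rpow_natCast A (w-1), ← Real.rpow_mul hApos.le]
      congr 1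
      rw [hr]
      have : ((w - 1 : ℕ) : ℝ) = (w:ℝ) - 1 := by
        have : (1:ℕ) ≤ w := hw
        push_cast [this]; ring
      rw [this]; field_simp
    have e2 : B = (B ^ w) ^ ((w:ℝ)⁻¹) := by
      rw [← Real.rpow_natCast B w, ← Real.rpow_mul hBpos.le, mul_inv_cancel₀ (ne_of_gt hwR),
        Real.rpow_one]
    rw [e1, e2]
    exact Real.rpow_le_rpow (by positivity) step1 (by positivity)
  have lhs_eq : ∏ i ∈ Finset.univ.filter P, (u i)⁻¹ = B⁻¹ := by
    rw [hB, ← Finset.prod_inv_distrib]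
  have rhs_eq : ∏ i, (u i) ^ (-r) = A ^ (-r) :=
    Real.finset_prod_rpow Finset.univ u (fun i _ => (hu i).1.le) (-r)
  rw [lhs_eq, rhs_eq, Real.rpow_neg hApos.le]
  exact inv_anti₀ (Real.rpow_pos_of_pos hApos r) key

end integrability

lemma le_last_simplex {w : ℕ} {t : Fin w → ℝ} (ht : ∀ i j : Fin w, i < j → t i < t j)
    {i j : Fin w} (hij : i ≤ j) : t i ≤ t j := by
  rcases lt_or_eq_of_le hij with h | h
  · exact (ht i j h).le
  · rw [h]

lemma integrableOn_word {w : ℕ} (hw : 0 < w) (a : ℕ → ℕ) (h1 : a 0 = 1) (h0 : a (w-1) = 0) :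
    IntegrableOn (fun t : Fin w → ℝ => ∏ i : Fin w, (if a (i:ℕ) = 1 then (1 - t i)⁻¹ else (t i)⁻¹))
      (openSimplex w) := by
  classical
  set c : ℝ := ((w:ℝ)-1)/w with hc
  have hwR : (0:ℝ) < (w:ℝ) := by exact_mod_cast hw
  have hc0 : 0 ≤ c := by
    apply div_nonneg _ hwR.le
    have : (1:ℝ) ≤ (w:ℝ) := by exact_mod_cast hw
    linarith
  have hc1 : c < 1 := by
    rw [hc, div_lt_one hwR]; linarith
  set g : ℝ → ℝ := (Set.Ioo (0:ℝ) 1).indicator (fun y => y ^ (-c) * (1 - y) ^ (-c)) with hg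
  have hgint : Integrable g :=
    (integrable_oneDim hc0 hc1).integrable_indicator measurableSet_Ioo
  have hG : Integrable (fun x : Fin w → ℝ => ∏ i : Fin w, g (x i)) :=
    Integrable.fintype_prod (𝕜 := ℝ) (fun _ => hgint)
  refine Integrable.mono' hG.integrableOn ?_ ?_
  · refine Measurable.aestronglyMeasurable ?_
    refine Finset.measurable_prod _ (fun i _ => ?_)
    split_ifs
    · exact (measurable_const.sub (measurable_pi_apply i)).inv
    · exact (measurable_pi_apply i).inv
  · rw [ae_restrict_iff' (measurableSet_openSimplex w)]
    refine Filter.Eventually.of_forall (fun t ht => ?_)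
    obtain ⟨hb, hmono⟩ := ht
    have hnn : ∀ i : Fin w, (0:ℝ) ≤ (if a (i:ℕ) = 1 then (1 - t i)⁻¹ else (t i)⁻¹) := by
      intro i
      split_ifs
      · exact inv_nonneg.mpr (by linarith [(hb i).2])
      · exact inv_nonneg.mpr (hb i).1.le
    rw [Real.norm_eq_abs, abs_of_nonneg (Finset.prod_nonneg fun i _ => hnn i)]
    have hgval : ∀ i : Fin w, g (t i) = (t i) ^ (-c) * (1 - t i) ^ (-c) := by
      intro i
      rw [hg, Set.indicator_of_mem (Set.mem_Ioo.mpr ⟨(hb i).1, (hb i).2⟩)]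
    calc ∏ i : Fin w, (if a (i:ℕ) = 1 then (1 - t i)⁻¹ else (t i)⁻¹)
        = (∏ i ∈ Finset.univ.filter (fun i : Fin w => a (i:ℕ) = 1), (1 - t i)⁻¹) *
          ∏ i ∈ Finset.univ.filter (fun i : Fin w => ¬ a (i:ℕ) = 1), (t i)⁻¹ :=
          Finset.prod_ite _ _
      _ ≤ (∏ i : Fin w, (1 - t i) ^ (-c)) * ∏ i : Fin w, (t i) ^ (-c) := by
          have b1 : ∏ i ∈ Finset.univ.filter (fun i : Fin w => a (i:ℕ) = 1), (1 - t i)⁻¹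
              ≤ ∏ i : Fin w, (1 - t i) ^ (-c) := by
            refine prod_inv_le_rpow hw (fun i => 1 - t i)
              (fun i => ⟨show (0:ℝ) < 1 - t i by linarith [(hb i).2], show (1:ℝ) - t i < 1 by linarith [(hb i).1]⟩)
              (fun i : Fin w => a (i:ℕ) = 1) ⟨w-1, by omega⟩ (by simp [h0]) ?_
            intro i _
            have : t i ≤ t ⟨w-1, by omega⟩ :=
              le_last_simplex hmono (by rw [Fin.le_def]; simp; omega)
            linarith
          have b2 : ∏ i ∈ Finset.univ.filter (fun i : Fin w => ¬ a (i:ℕ) = 1), (t i)⁻¹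
              ≤ ∏ i : Fin w, (t i) ^ (-c) := by
            refine prod_inv_le_rpow hw t (fun i => hb i)
              (fun i : Fin w => ¬ a (i:ℕ) = 1) ⟨0, hw⟩ (by simp [h1]) ?_
            intro i _
            exact le_last_simplex hmono (by rw [Fin.le_def]; simp)
          refine mul_le_mul b1 b2 (Finset.prod_nonneg fun i _ => inv_nonneg.mpr (hb i).1.le)
            (Finset.prod_nonneg fun i _ => Real.rpow_nonneg (by linarith [(hb i).2]) _)
      _ = ∏ i : Fin w, g (t i) := by
          rw [← Finset.prod_mul_distrib]
          refine Finset.prod_congr rfl (fun i _ => ?_)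
          rw [hgval i, mul_comm]

section transport
variable {p q : ℕ} (a b : ℕ → ℕ) (S : Finset (Fin (p + q))) (hS : S.card = p)

lemma mergeMap_prod_split (x : (Fin p → ℝ) × (Fin q → ℝ)) :
    (∏ k : Fin (p + q), (if shuffleWord p q a b S (k:ℕ) = 1
        then (1 - mergeMap S hS x k)⁻¹ else (mergeMap S hS x k)⁻¹)) =
    (∏ i : Fin p, (if a (i:ℕ) = 1 then (1 - x.1 i)⁻¹ else (x.1 i)⁻¹)) *
    ∏ j : Fin q, (if b (j:ℕ) = 1 then (1 - x.2 j)⁻¹ else (x.2 j)⁻¹) := by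
  rw [← Equiv.prod_comp (mergeEquiv S hS)
    (fun k : Fin (p+q) => (if shuffleWord p q a b S (k:ℕ) = 1
        then (1 - mergeMap S hS x k)⁻¹ else (mergeMap S hS x k)⁻¹)),
    Fintype.prod_sum_type]
  congr 1
  · refine Finset.prod_congr rfl (fun i _ => ?_)
    have e1 : mergeMap S hS x (mergeEquiv S hS (Sum.inl i)) = x.1 i :=
      mergeMap_apply S hS x (Sum.inl i)
    have e2 : shuffleWord p q a b S ((mergeEquiv S hS (Sum.inl i) : Fin (p+q)) : ℕ) = a i := by
      rw [mergeEquiv_inl]; exact shuffle_inl a b S hS i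
    rw [e1, e2]
  · refine Finset.prod_congr rfl (fun j _ => ?_)
    have e1 : mergeMap S hS x (mergeEquiv S hS (Sum.inr j)) = x.2 j :=
      mergeMap_apply S hS x (Sum.inr j)
    have e2 : shuffleWord p q a b S ((mergeEquiv S hS (Sum.inr j) : Fin (p+q)) : ℕ) = b j := by
      rw [mergeEquiv_inr]; exact shuffle_inr a b S hS j
    rw [e1, e2]

include hS in
lemma DS_subset : DS p q S ⊆ (openSimplex p) ×ˢ (openSimplex q) := by
  rw [DS_eq S hS]
  intro x hx
  obtain ⟨hb, hmono⟩ := hx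
  constructor
  · constructor
    · intro i
      have := hb (mergeEquiv S hS (Sum.inl i))
      rwa [mergeMap_apply S hS x (Sum.inl i)] at this
    · intro i j hij
      have hlt : mergeEquiv S hS (Sum.inl i) < mergeEquiv S hS (Sum.inl j) := by
        rw [mergeEquiv_inl, mergeEquiv_inl]
        exact (S.orderEmbOfFin hS).strictMono hij
      have := hmono _ _ hlt
      rwa [mergeMap_apply S hS x (Sum.inl i), mergeMap_apply S hS x (Sum.inl j)] at this
  · constructor
    · intro i
      have := hb (mergeEquiv S hS (Sum.inr i))
      rwa [mergeMap_apply S hS x (Sum.inr i)] at this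
    · intro i j hij
      have hlt : mergeEquiv S hS (Sum.inr i) < mergeEquiv S hS (Sum.inr j) := by
        rw [mergeEquiv_inr, mergeEquiv_inr]
        exact (Sᶜ.orderEmbOfFin _).strictMono hij
      have := hmono _ _ hlt
      rwa [mergeMap_apply S hS x (Sum.inr i), mergeMap_apply S hS x (Sum.inr j)] at this

include hS in
lemma integral_DS :
    ∫ x : (Fin p → ℝ) × (Fin q → ℝ) in DS p q S,
      ((∏ i : Fin p, (if a (i:ℕ) = 1 then (1 - x.1 i)⁻¹ else (x.1 i)⁻¹)) *
       ∏ j : Fin q, (if b (j:ℕ) = 1 then (1 - x.2 j)⁻¹ else (x.2 j)⁻¹)) =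
    wordIntegral (p + q) (shuffleWord p q a b S) := by
  rw [DS_eq S hS, wordIntegral,
    ← (mergeMap_measurePreserving S hS).setIntegral_preimage_emb
      (MeasurableEquiv.measurableEmbedding _)
      (fun u : Fin (p+q) → ℝ => ∏ k : Fin (p+q),
        (if shuffleWord p q a b S (k:ℕ) = 1 then (1 - u k)⁻¹ else (u k)⁻¹))
      (openSimplex (p+q))]
  refine integral_congr_ae (Filter.Eventually.of_forall fun x => ?_)
  exact (mergeMap_prod_split a b S hS x).symm

end transport

section partition
variable {p q : ℕ}

def crossSet (p q : ℕ) : Set ((Fin p → ℝ) × (Fin q → ℝ)) := {x | ∃ i j, x.1 i = x.2 j}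

lemma crossSet_eq : crossSet p q =
    ⋃ i : Fin p, ⋃ j : Fin q, {x : (Fin p → ℝ) × (Fin q → ℝ) | x.1 i = x.2 j} := by
  ext x; simp [crossSet]

lemma measurableSet_crossSet : MeasurableSet (crossSet p q) := by
  rw [crossSet_eq]
  exact MeasurableSet.iUnion fun i => MeasurableSet.iUnion fun j =>
    measurableSet_eq_fun (measurable_fst.eval) (measurable_snd.eval)

lemma volume_crossSet : volume (crossSet p q) = 0 := by
  rw [crossSet_eq]
  refine measure_iUnion_null fun i => measure_iUnion_null fun j => ?_
  have hm : MeasurableSet {x : (Fin p → ℝ) × (Fin q → ℝ) | x.1 i = x.2 j} :=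
    measurableSet_eq_fun (measurable_fst.eval) (measurable_snd.eval)
  rw [Measure.volume_eq_prod, Measure.measure_prod_null hm]
  refine Filter.Eventually.of_forall fun s => ?_
  simp only [Pi.zero_apply]
  have heq : (Prod.mk s ⁻¹' {x : (Fin p → ℝ) × (Fin q → ℝ) | x.1 i = x.2 j})
      = {t : Fin q → ℝ | t j = s i} := by
    ext t; simp [eq_comm]
  rw [heq, volume_pi]
  exact Measure.pi_hyperplane (fun _ : Fin q => (volume : Measure ℝ)) j (s i)

lemma measurableSet_DS (S : Finset (Fin (p + q))) : MeasurableSet (DS p q S) := by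
  unfold DS
  split_ifs with h
  · exact (mergeMap S h).measurable (measurableSet_openSimplex _)
  · exact MeasurableSet.empty

lemma DS_coverage (x : (Fin p → ℝ) × (Fin q → ℝ))
    (hx : x ∈ (openSimplex p) ×ˢ (openSimplex q)) (hxN : x ∉ crossSet p q) :
    ∃ S : Finset (Fin (p + q)), S.card = p ∧ x ∈ DS p q S := by
  classical
  obtain ⟨⟨hb1, hm1⟩, hb2, hm2⟩ := hx
  have hs : StrictMono x.1 := fun i j h => hm1 i j h
  have ht : StrictMono x.2 := fun i j h => hm2 i j h
  set h : Fin p ⊕ Fin q → ℝ := Sum.elim x.1 x.2 with hh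
  have hinj : Function.Injective h := by
    rintro (i | i) (j | j) hij
    · exact congrArg Sum.inl (hs.injective hij)
    · exact absurd ⟨i, j, hij⟩ hxN
    · exact absurd ⟨j, i, hij.symm⟩ hxN
    · exact congrArg Sum.inr (ht.injective hij)
  set T : Finset ℝ := Finset.image h Finset.univ with hTdef
  have hT : T.card = p + q := by
    rw [hTdef, Finset.card_image_of_injective _ hinj, Finset.card_univ]
    simp
  set v := T.orderEmbOfFin hT with hv
  set Rs : Finset ℝ := Finset.image x.1 Finset.univ with hRsdef
  have hRs : Rs.card = p := by
    rw [hRsdef, Finset.card_image_of_injective _ hs.injective, Finset.card_univ, Fintype.card_fin]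
  set Rt : Finset ℝ := Finset.image x.2 Finset.univ with hRtdef
  have hRt : Rt.card = q := by
    rw [hRtdef, Finset.card_image_of_injective _ ht.injective, Finset.card_univ, Fintype.card_fin]
  have hmemT : ∀ i : Fin p, x.1 i ∈ T := fun i =>
    Finset.mem_image.mpr ⟨Sum.inl i, Finset.mem_univ _, rfl⟩
  set φ : Fin p → Fin (p + q) := fun i => (T.orderIsoOfFin hT).symm ⟨x.1 i, hmemT i⟩ with hφdef
  have hφ : ∀ i, v (φ i) = x.1 i := by
    intro i
    have h2 := congrArg Subtype.val ((T.orderIsoOfFin hT).apply_symm_apply ⟨x.1 i, hmemT i⟩)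
    rwa [Finset.coe_orderIsoOfFin_apply] at h2
  set S : Finset (Fin (p + q)) :=
    Finset.univ.filter (fun k => ∃ i, x.1 i = v k) with hSdef
  have hchar : ∀ k, k ∈ S ↔ ∃ i, x.1 i = v k := by
    intro k; rw [hSdef, Finset.mem_filter]
    simp
  have hSimg : S = Finset.image φ Finset.univ := by
    ext k
    rw [hchar k, Finset.mem_image]
    constructor
    · rintro ⟨i, hi⟩
      refine ⟨i, Finset.mem_univ i, v.injective ?_⟩
      rw [hφ i, hi]
    · rintro ⟨i, -, rfl⟩
      exact ⟨i, (hφ i).symm⟩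
  have hScard : S.card = p := by
    rw [hSimg, Finset.card_image_of_injective _
      (fun i j hij => hs.injective (by rw [← hφ i, ← hφ j, hij])),
      Finset.card_univ, Fintype.card_fin]
  refine ⟨S, hScard, ?_⟩
  set σ := S.orderEmbOfFin hScard
  set τ := Sᶜ.orderEmbOfFin (card_compl_shuffle S hScard)
  have claim1 : ∀ i : Fin p, v (σ i) = x.1 i := by
    have hA : (fun i => v (σ i)) = ⇑(Rs.orderEmbOfFin hRs) := by
      refine Finset.orderEmbOfFin_unique hRs (fun i => ?_) (v.strictMono.comp σ.strictMono)
      obtain ⟨i', hi'⟩ := (hchar _).mp (Finset.orderEmbOfFin_mem S hScard i)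
      exact hi' ▸ Finset.mem_image.mpr ⟨i', Finset.mem_univ _, rfl⟩
    have hB : x.1 = ⇑(Rs.orderEmbOfFin hRs) :=
      Finset.orderEmbOfFin_unique hRs
        (fun i => Finset.mem_image.mpr ⟨i, Finset.mem_univ _, rfl⟩) hs
    intro i
    rw [congrFun hA i, congrFun hB.symm i]
  have claim2 : ∀ j : Fin q, v (τ j) = x.2 j := by
    have hA : (fun j => v (τ j)) = ⇑(Rt.orderEmbOfFin hRt) := by
      refine Finset.orderEmbOfFin_unique hRt (fun j => ?_) (v.strictMono.comp τ.strictMono)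
      have hmem := Finset.orderEmbOfFin_mem Sᶜ (card_compl_shuffle S hScard) j
      have hnotS : τ j ∉ S := Finset.mem_compl.mp hmem
      have hvT : v (τ j) ∈ T := Finset.orderEmbOfFin_mem T hT (τ j)
      rw [hTdef, Finset.mem_image] at hvT
      obtain ⟨z, -, hz⟩ := hvT
      rcases z with i | j'
      · rw [hh] at hz
        simp only [Sum.elim_inl] at hz
        exact absurd ((hchar (τ j)).mpr ⟨i, hz⟩) hnotS
      · exact Finset.mem_image.mpr ⟨j', Finset.mem_univ _, hz⟩
    have hB : x.2 = ⇑(Rt.orderEmbOfFin hRt) :=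
      Finset.orderEmbOfFin_unique hRt
        (fun j => Finset.mem_image.mpr ⟨j, Finset.mem_univ _, rfl⟩) ht
    intro j
    rw [congrFun hA j, congrFun hB.symm j]
  have hveq : mergeMap S hScard x = fun k => v k := by
    funext k
    rw [mergeMap_apply' S hScard x k]
    rcases hzk : (mergeEquiv S hScard).symm k with i | j
    · have : mergeEquiv S hScard (Sum.inl i) = k := by
        rw [← hzk, Equiv.apply_symm_apply]
      rw [← this, mergeEquiv_inl]
      exact (claim1 i).symm
    · have : mergeEquiv S hScard (Sum.inr j) = k := by
        rw [← hzk, Equiv.apply_symm_apply]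
      rw [← this, mergeEquiv_inr]
      exact (claim2 j).symm
  rw [DS_eq S hScard]
  show mergeMap S hScard x ∈ openSimplex (p + q)
  rw [hveq]
  constructor
  · intro k
    have hvT : v k ∈ T := Finset.orderEmbOfFin_mem T hT k
    rw [hTdef, Finset.mem_image] at hvT
    obtain ⟨z, -, hz⟩ := hvT
    rcases z with i | j
    · have hg : (0:ℝ) < v k ∧ v k < 1 := by rw [← hz]; exact hb1 i
      exact hg
    · have hg : (0:ℝ) < v k ∧ v k < 1 := by rw [← hz]; exact hb2 j
      exact hg
  · intro k k' hkk'
    exact v.strictMono hkk'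

lemma DS_disjoint (S S' : Finset (Fin (p + q))) (hS : S.card = p) (hS' : S'.card = p)
    (x : (Fin p → ℝ) × (Fin q → ℝ)) (hx : x ∈ DS p q S) (hx' : x ∈ DS p q S')
    (hxN : x ∉ crossSet p q) : S = S' := by
  classical
  have hxP := DS_subset S hS hx
  obtain ⟨⟨hb1, hm1⟩, hb2, hm2⟩ := hxP
  have hs : StrictMono x.1 := fun i j h => hm1 i j h
  have ht : StrictMono x.2 := fun i j h => hm2 i j h
  set h : Fin p ⊕ Fin q → ℝ := Sum.elim x.1 x.2 with hh
  have hinj : Function.Injective h := by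
    rintro (i | i) (j | j) hij
    · exact congrArg Sum.inl (hs.injective hij)
    · exact absurd ⟨i, j, hij⟩ hxN
    · exact absurd ⟨j, i, hij.symm⟩ hxN
    · exact congrArg Sum.inr (ht.injective hij)
  set T : Finset ℝ := Finset.image h Finset.univ with hTdef
  have hT : T.card = p + q := by
    rw [hTdef, Finset.card_image_of_injective _ hinj, Finset.card_univ]
    simp
  rw [DS_eq S hS] at hx
  rw [DS_eq S' hS'] at hx'
  set u := mergeMap S hS x with hu
  set u' := mergeMap S' hS' x with hu'
  have key : ∀ (W : Finset (Fin (p+q))) (hW : W.card = p)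
      (hxW : x ∈ mergeMap W hW ⁻¹' openSimplex (p + q)),
      mergeMap W hW x = ⇑(T.orderEmbOfFin hT) := by
    intro W hW hxW
    refine Finset.orderEmbOfFin_unique hT (fun k => ?_)
      (fun k k' hkk' => hxW.2 k k' hkk')
    rw [mergeMap_apply' W hW x k, hTdef, Finset.mem_image]
    exact ⟨(mergeEquiv W hW).symm k, Finset.mem_univ _, rfl⟩
  have hueq : u = u' := by rw [hu, hu', key S hS hx, key S' hS' hx']
  have char : ∀ (W : Finset (Fin (p+q))) (hW : W.card = p)
      (hxW : x ∈ mergeMap W hW ⁻¹' openSimplex (p + q)) (k : Fin (p+q)),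
      k ∈ W ↔ ∃ i, x.1 i = mergeMap W hW x k := by
    intro W hW hxW k
    constructor
    · intro hk
      have : k ∈ Set.range (W.orderEmbOfFin hW) := by
        rw [Finset.range_orderEmbOfFin]; exact hk
      obtain ⟨i, hi⟩ := this
      refine ⟨i, ?_⟩
      have := mergeMap_apply W hW x (Sum.inl i)
      rw [mergeEquiv_inl, hi] at this
      exact this.symm
    · rintro ⟨i, hi⟩
      by_contra hk
      have hkc : k ∈ Wᶜ := Finset.mem_compl.mpr hk
      have : k ∈ Set.range (Wᶜ.orderEmbOfFin (card_compl_shuffle W hW)) := by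
        rw [Finset.range_orderEmbOfFin]; exact hkc
      obtain ⟨j, hj⟩ := this
      have h2 := mergeMap_apply W hW x (Sum.inr j)
      rw [mergeEquiv_inr, hj] at h2
      exact hxN ⟨i, j, by rw [hi, h2]; rfl⟩
  ext k
  rw [char S hS hx k, char S' hS' hx' k, ← hu, ← hu', hueq]
end partition

/-- The shuffle product formula for iterated integrals: for convergent words `a`, `b` of
lengths `p`, `q`, every shuffle `c_S` is convergent and `I(a)·I(b) = Σ_{|S|=p} I(c_S)`. -/
theorem stmt4 (p q : ℕ) (hp : 0 < p) (hq : 0 < q) (a b : ℕ → ℕ)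
    (hav : ∀ i < p, a i = 0 ∨ a i = 1) (hbv : ∀ i < q, b i = 0 ∨ b i = 1)
    (ha1 : a 0 = 1) (ha0 : a (p - 1) = 0) (hb1 : b 0 = 1) (hb0 : b (q - 1) = 0) :
    (∀ S : Finset (Fin (p + q)), S.card = p →
      shuffleWord p q a b S 0 = 1 ∧ shuffleWord p q a b S (p + q - 1) = 0) ∧
    wordIntegral p a * wordIntegral q b =
      ∑ S ∈ Finset.univ.filter (fun S : Finset (Fin (p + q)) => S.card = p),
        wordIntegral (p + q) (shuffleWord p q a b S) := by
  classical
  refine ⟨fun S hS => shuffle_endpoints a b S hS hp hq ha1 ha0 hb1 hb0, ?_⟩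
  set Fa : (Fin p → ℝ) → ℝ :=
    fun s => ∏ i : Fin p, (if a (i:ℕ) = 1 then (1 - s i)⁻¹ else (s i)⁻¹) with hFa
  set Gb : (Fin q → ℝ) → ℝ :=
    fun t => ∏ j : Fin q, (if b (j:ℕ) = 1 then (1 - t j)⁻¹ else (t j)⁻¹) with hGb
  have hFaInt : IntegrableOn Fa (openSimplex p) := integrableOn_word hp a ha1 ha0
  have hGbInt : IntegrableOn Gb (openSimplex q) := integrableOn_word hq b hb1 hb0
  have hIntOn : IntegrableOn (fun x : (Fin p → ℝ) × (Fin q → ℝ) => Fa x.1 * Gb x.2)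
      ((openSimplex p) ×ˢ (openSimplex q)) := by
    rw [IntegrableOn, Measure.volume_eq_prod, ← Measure.prod_restrict]
    exact hFaInt.mul_prod hGbInt
  set t : Finset (Finset (Fin (p + q))) := Finset.univ.filter (fun S => S.card = p) with ht
  have hmem : ∀ S ∈ t, S.card = p := fun S hSt => (Finset.mem_filter.mp hSt).2
  have hsub : ∀ S ∈ t, DS p q S \ crossSet p q ⊆ (openSimplex p) ×ˢ (openSimplex q) :=
    fun S hSt => (Set.diff_subset).trans (DS_subset S (hmem S hSt))
  have step1 : wordIntegral p a * wordIntegral q b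
      = ∫ x : (Fin p → ℝ) × (Fin q → ℝ) in (openSimplex p) ×ˢ (openSimplex q),
          Fa x.1 * Gb x.2 := by
    rw [wordIntegral, wordIntegral, Measure.volume_eq_prod, setIntegral_prod_mul]
  have step2 : (openSimplex p) ×ˢ (openSimplex q)
      =ᵐ[volume] ⋃ S ∈ t, (DS p q S \ crossSet p q) := by
    rw [MeasureTheory.ae_eq_set]
    constructor
    · refine measure_mono_null ?_ volume_crossSet
      intro x hx
      obtain ⟨hx1, hx2⟩ := hx
      by_contra hxN
      obtain ⟨S, hScard, hxS⟩ := DS_coverage x hx1 hxN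
      exact hx2 (Set.mem_biUnion (Finset.mem_filter.mpr ⟨Finset.mem_univ S, hScard⟩)
        ⟨hxS, hxN⟩)
    · have : (⋃ S ∈ t, (DS p q S \ crossSet p q)) \ (openSimplex p) ×ˢ (openSimplex q) = ∅ := by
        rw [Set.diff_eq_empty]
        exact Set.iUnion₂_subset hsub
      rw [this, measure_empty]
  have step3 : ∫ x in ⋃ S ∈ t, (DS p q S \ crossSet p q), Fa x.1 * Gb x.2 =
      ∑ S ∈ t, ∫ x in DS p q S \ crossSet p q, Fa x.1 * Gb x.2 := by
    refine integral_biUnion_finset t (fun S _ => (measurableSet_DS S).diff measurableSet_crossSet)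
      ?_ (fun S hSt => hIntOn.mono_set (hsub S hSt))
    intro S hSt S' hS't hne
    rw [Function.onFun, Set.disjoint_left]
    intro x hx hx'
    exact hne (DS_disjoint S S' (hmem S hSt) (hmem S' hS't) x hx.1 hx'.1 hx.2)
  have step4 : ∀ S ∈ t, ∫ x in DS p q S \ crossSet p q, Fa x.1 * Gb x.2
      = wordIntegral (p + q) (shuffleWord p q a b S) := by
    intro S hSt
    have hae : (DS p q S \ crossSet p q : Set ((Fin p → ℝ) × (Fin q → ℝ))) =ᵐ[volume] DS p q S := by
      rw [MeasureTheory.ae_eq_set]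
      constructor
      · rw [Set.diff_eq_empty.mpr Set.diff_subset, measure_empty]
      · refine measure_mono_null ?_ volume_crossSet
        intro x hx
        by_contra hxN
        exact hx.2 ⟨hx.1, hxN⟩
    rw [setIntegral_congr_set hae]
    exact integral_DS a b S (hmem S hSt)
  rw [step1, setIntegral_congr_set step2, step3]
  exact Finset.sum_congr rfl step4
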